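/- (The conflict set in the example is not normally embedded.) In ℝ³ with coordinates (x₁, x₂, x₃), let X₁ = {x : x₃ = 1 or x₃ = −1}, X₂ = {(1,0,0), (−1,0,0)}, and C = Conf({X₁, X₂}) = {x : infDist(x, X₁) = infDist(x, X₂)}. Then there is no constant K > 0 with the property that for all p, q ∈ C there exists a continuous map γ : [0,1] → ℝ³ with γ(0) = p, γ(1) = q, γ([0,1]) ⊆ C, and total variation (length) of γ on [0,1] at most K · dist(p, q). In other words, the inner (length) metric of C is not bi-Lipschitz comparable to the induced Euclidean metric. -/

import Mathlib

open Metric Set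

/-- The union of the two horizontal planes `x₃ = 1` and `x₃ = -1` in `ℝ³`. -/
def Xone : Set (EuclideanSpace ℝ (Fin 3)) := {x | x 2 = 1 ∨ x 2 = -1}

/-- The two points `(1,0,0)` and `(-1,0,0)` in `ℝ³`. -/
noncomputable def Xtwo : Set (EuclideanSpace ℝ (Fin 3)) :=
  {EuclideanSpace.single (0 : Fin 3) (1 : ℝ), EuclideanSpace.single (0 : Fin 3) (-1 : ℝ)}

/-- The conflict set of `Xone` and `Xtwo`: points equidistant from them. -/
noncomputable def C : Set (EuclideanSpace ℝ (Fin 3)) :=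
  {x | Metric.infDist x Xone = Metric.infDist x Xtwo}

/-- points of `ℝ³` from coordinates -/
def pt (u v w : ℝ) : EuclideanSpace ℝ (Fin 3) := WithLp.toLp 2 ![u, v, w]

lemma pt_apply0 (u v w : ℝ) : pt u v w 0 = u := rfl
lemma pt_apply1 (u v w : ℝ) : pt u v w 1 = v := rfl
lemma pt_apply2 (u v w : ℝ) : pt u v w 2 = w := rfl

lemma le_infDist' {x : EuclideanSpace ℝ (Fin 3)} {s : Set (EuclideanSpace ℝ (Fin 3))}
    (hs : s.Nonempty) {b : ℝ} (h : ∀ y ∈ s, b ≤ dist x y) : b ≤ infDist x s := by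
  rw [infDist_eq_iInf]
  haveI : Nonempty s := hs.to_subtype
  exact le_ciInf fun y => h y y.2

lemma dist_eq3 (x y : EuclideanSpace ℝ (Fin 3)) :
    dist x y = Real.sqrt ((x 0 - y 0)^2 + (x 1 - y 1)^2 + (x 2 - y 2)^2) := by
  rw [EuclideanSpace.dist_eq, Fin.sum_univ_three]
  simp [Real.dist_eq, sq_abs]

lemma single_eq (a : ℝ) : (EuclideanSpace.single (0 : Fin 3) a) = pt a 0 0 := by
  ext i
  fin_cases i <;> simp [EuclideanSpace.single_apply, pt]

lemma dist_update (x : EuclideanSpace ℝ (Fin 3)) (c : ℝ) :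
    dist x (WithLp.toLp 2 fun i => if i = 2 then c else x i) = |x 2 - c| := by
  rw [EuclideanSpace.dist_eq, Fin.sum_univ_three]
  simp [Real.dist_eq, sq_abs, Real.sqrt_sq_eq_abs]

lemma infDist_Xone (x : EuclideanSpace ℝ (Fin 3)) :
    infDist x Xone = min |x 2 - 1| |x 2 + 1| := by
  apply le_antisymm
  · apply le_min
    · refine le_trans (infDist_le_dist_of_mem (s := Xone)
        (y := WithLp.toLp 2 fun i => if i = 2 then (1:ℝ) else x i) (by left; simp)) ?_
      rw [dist_update]
    · refine le_trans (infDist_le_dist_of_mem (s := Xone)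
        (y := WithLp.toLp 2 fun i => if i = 2 then (-1:ℝ) else x i) (by right; simp)) ?_
      rw [dist_update]
      rw [show x 2 - (-1) = x 2 + 1 by ring]
  · apply le_infDist' ⟨(WithLp.toLp 2 fun i => if i = 2 then (1:ℝ) else x i), by left; simp⟩
    intro y hy
    have hb : |x 2 - y 2| ≤ dist x y := by
      rw [dist_eq3, ← Real.sqrt_sq_eq_abs]
      apply Real.sqrt_le_sqrt
      nlinarith [sq_nonneg (x 0 - y 0), sq_nonneg (x 1 - y 1)]
    rcases hy with h2 | h2 <;> rw [h2] at hb
    · exact le_trans (min_le_left _ _) hb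
    · refine le_trans (min_le_right _ _) ?_
      rwa [show x 2 + 1 = x 2 - (-1) by ring]

lemma infDist_Xtwo (x : EuclideanSpace ℝ (Fin 3)) :
    infDist x Xtwo = min (dist x (pt 1 0 0)) (dist x (pt (-1) 0 0)) := by
  have h1 : (EuclideanSpace.single (0 : Fin 3) (1:ℝ)) = pt 1 0 0 := single_eq 1
  have h2 : (EuclideanSpace.single (0 : Fin 3) (-1:ℝ)) = pt (-1) 0 0 := single_eq (-1)
  apply le_antisymm
  · apply le_min
    · exact h1 ▸ infDist_le_dist_of_mem (Or.inl rfl)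
    · exact h2 ▸ infDist_le_dist_of_mem (Or.inr rfl)
  · apply le_infDist' ⟨_, Or.inl rfl⟩
    rintro y (rfl | rfl)
    · rw [h1]; exact min_le_left _ _
    · rw [h2]; exact min_le_right _ _

/-- the only point of `C` on the plane `x₁ = 0` is the origin -/
lemma C_inter_plane {x : EuclideanSpace ℝ (Fin 3)} (hx : x ∈ C) (h0 : x 0 = 0) :
    x = (0 : EuclideanSpace ℝ (Fin 3)) := by
  have h := hx
  rw [C, mem_setOf_eq, infDist_Xone, infDist_Xtwo] at h
  have hS : (0:ℝ) ≤ 1 + (x 1)^2 + (x 2)^2 := by positivity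
  have hd1 : dist x (pt 1 0 0) = Real.sqrt (1 + (x 1)^2 + (x 2)^2) := by
    rw [dist_eq3, pt_apply0, pt_apply1, pt_apply2, h0]; norm_num
  have hd2 : dist x (pt (-1) 0 0) = Real.sqrt (1 + (x 1)^2 + (x 2)^2) := by
    rw [dist_eq3, pt_apply0, pt_apply1, pt_apply2, h0]; norm_num
  rw [hd1, hd2, min_self] at h
  have h12 : x 1 = 0 ∧ x 2 = 0 := by
    rcases le_total 0 (x 2) with hs | hs
    · have hmin : min |x 2 - 1| |x 2 + 1| = |x 2 - 1| := by
        apply min_eq_left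
        rw [abs_of_nonneg (by linarith : (0:ℝ) ≤ x 2 + 1)]
        rcases abs_cases (x 2 - 1) with ⟨he, _⟩ | ⟨he, _⟩ <;> rw [he] <;> linarith
      rw [hmin] at h
      have : (x 2 - 1)^2 = 1 + (x 1)^2 + (x 2)^2 := by
        rw [← sq_abs, h, Real.sq_sqrt hS]
      constructor <;> nlinarith [sq_nonneg (x 1)]
    · have hmin : min |x 2 - 1| |x 2 + 1| = |x 2 + 1| := by
        apply min_eq_right
        rw [abs_of_nonpos (by linarith : x 2 - 1 ≤ 0)]
        rcases abs_cases (x 2 + 1) with ⟨he, _⟩ | ⟨he, _⟩ <;> rw [he] <;> linarith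
      rw [hmin] at h
      have : (x 2 + 1)^2 = 1 + (x 1)^2 + (x 2)^2 := by
        rw [← sq_abs, h, Real.sq_sqrt hS]
      constructor <;> nlinarith [sq_nonneg (x 1)]
  ext i
  fin_cases i
  · exact h0
  · exact h12.1
  · exact h12.2

/-- the test points lie in `C` -/
lemma pt_mem_C {s : ℝ} (hs0 : 0 < s) (hs1 : s ≤ 1) (ε : ℝ) (hε : ε = 1 ∨ ε = -1) :
    pt (ε * (1 - Real.sqrt (1 - s^2))) s 0 ∈ C := by
  set a := 1 - Real.sqrt (1 - s^2) with ha
  have h1s : (0:ℝ) ≤ 1 - s^2 := by nlinarith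
  have hsq : Real.sqrt (1 - s^2) ≤ 1 := by
    calc Real.sqrt (1 - s^2) ≤ Real.sqrt 1 := Real.sqrt_le_sqrt (by nlinarith)
    _ = 1 := Real.sqrt_one
  have hsqnn : 0 ≤ Real.sqrt (1 - s^2) := Real.sqrt_nonneg _
  have ha0 : 0 ≤ a := by simp only [ha]; linarith
  have hkey : (a - 1)^2 + s^2 = 1 := by
    have h := Real.sq_sqrt h1s
    simp only [ha]; nlinarith
  have hfar : (1:ℝ) ≤ (a + 1)^2 + s^2 := by nlinarith
  have hone : (1:ℝ) = Real.sqrt 1 := Real.sqrt_one.symm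
  show Metric.infDist (pt (ε * a) s 0) Xone = Metric.infDist (pt (ε * a) s 0) Xtwo
  rw [infDist_Xone, infDist_Xtwo, dist_eq3, dist_eq3]
  simp only [pt_apply0, pt_apply1, pt_apply2]
  norm_num
  rcases hε with rfl | rfl
  · rw [one_mul]
    have h1 : Real.sqrt ((a - 1)^2 + s^2) = 1 := by rw [hkey, Real.sqrt_one]
    have h2 : (1:ℝ) ≤ Real.sqrt ((a + 1)^2 + s^2) := by
      rw [hone]; exact Real.sqrt_le_sqrt (by nlinarith)
    rw [h1, min_eq_left h2]
  · have h2 : Real.sqrt ((-1 * a + 1)^2 + s^2) = 1 := by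
      rw [show (-1 * a + 1)^2 = (a - 1)^2 by ring, hkey, Real.sqrt_one]
    have h3 : (1:ℝ) ≤ Real.sqrt ((-1 * a - 1)^2 + s^2) := by
      rw [show ((-1:ℝ) * a - 1)^2 = (a + 1)^2 by ring, hone]
      exact Real.sqrt_le_sqrt (by nlinarith)
    rw [h2, min_eq_right h3]

/-- The conflict set of the example is not normally embedded: no constant `K > 0`
allows joining any two points of `C` by a path inside `C` of length at most
`K` times their Euclidean distance. -/
theorem conf_example_not_normally_embedded :
    ¬ ∃ K : ℝ, 0 < K ∧ ∀ p ∈ C, ∀ q ∈ C,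
      ∃ γ : ℝ → EuclideanSpace ℝ (Fin 3),
        ContinuousOn γ (Set.Icc 0 1) ∧ γ 0 = p ∧ γ 1 = q ∧
        γ '' Set.Icc 0 1 ⊆ C ∧
        eVariationOn γ (Set.Icc 0 1) ≤ ENNReal.ofReal (K * dist p q) := by
  rintro ⟨K, hK, H⟩
  set s : ℝ := min 1 (1/(4*K)) with hsdef
  have hs0 : 0 < s := lt_min one_pos (by positivity)
  have hs1 : s ≤ 1 := min_le_left _ _
  have hsK : s ≤ 1/(4*K) := min_le_right _ _
  set a : ℝ := 1 - Real.sqrt (1 - s^2) with hadef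
  have h1s : (0:ℝ) ≤ 1 - s^2 := by nlinarith
  have hsqrt := Real.sq_sqrt h1s
  have hsqnn : 0 ≤ Real.sqrt (1 - s^2) := Real.sqrt_nonneg _
  have hsq1 : Real.sqrt (1 - s^2) ≤ 1 := by
    calc Real.sqrt (1 - s^2) ≤ Real.sqrt 1 := Real.sqrt_le_sqrt (by nlinarith)
    _ = 1 := Real.sqrt_one
  have ha0 : 0 ≤ a := by simp only [hadef]; linarith
  have hale : a ≤ s^2 := by
    simp only [hadef]
    nlinarith [hsqrt, hsqnn, hsq1]
  set p : EuclideanSpace ℝ (Fin 3) := pt (1 * a) s 0 with hpdef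
  set q : EuclideanSpace ℝ (Fin 3) := pt ((-1) * a) s 0 with hqdef
  have hp : p ∈ C := pt_mem_C hs0 hs1 1 (Or.inl rfl)
  have hq : q ∈ C := pt_mem_C hs0 hs1 (-1) (Or.inr rfl)
  obtain ⟨γ, hcont, hγ0, hγ1, himg, hlen⟩ := H p hp q hq
  -- IVT to find a crossing of the plane x₁ = 0
  have hcont0 : ContinuousOn (fun t => γ t 0) (Set.Icc 0 1) :=
    (EuclideanSpace.proj (0 : Fin 3)).continuous.comp_continuousOn hcont
  have he0 : γ 0 0 = a := by rw [hγ0, hpdef, pt_apply0]; ring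
  have he1 : γ 1 0 = -a := by rw [hγ1, hqdef, pt_apply0]; ring
  have hmem : (0:ℝ) ∈ Set.Icc (γ 1 0) (γ 0 0) := by
    rw [he0, he1]; constructor <;> linarith
  obtain ⟨t, ht, hγt⟩ := intermediate_value_Icc' (by norm_num : (0:ℝ) ≤ 1) hcont0 hmem
  have hγtC : γ t ∈ C := himg ⟨t, ht, rfl⟩
  have hzero : γ t = 0 := C_inter_plane hγtC hγt
  -- length lower bound
  have hvar : edist p (0 : EuclideanSpace ℝ (Fin 3)) ≤ eVariationOn γ (Set.Icc 0 1) := by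
    rw [← hγ0, ← hzero]
    exact eVariationOn.edist_le γ (by constructor <;> norm_num) ht
  -- distances
  have hdp0 : dist p (0 : EuclideanSpace ℝ (Fin 3)) = Real.sqrt (a^2 + s^2) := by
    rw [hpdef, dist_eq3, pt_apply0, pt_apply1, pt_apply2]
    show Real.sqrt ((1*a - 0)^2 + (s - 0)^2 + ((0:ℝ) - 0)^2) = _
    norm_num
  have hdpq : dist p q = 2 * a := by
    rw [hpdef, hqdef, dist_eq3, pt_apply0, pt_apply1, pt_apply2,
      pt_apply0, pt_apply1, pt_apply2]
    rw [show (1*a - (-1)*a)^2 + (s - s)^2 + ((0:ℝ) - 0)^2 = (2*a)^2 by ring]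
    rw [Real.sqrt_sq (by linarith)]
  have hslb : s ≤ dist p (0 : EuclideanSpace ℝ (Fin 3)) := by
    rw [hdp0]
    calc s = Real.sqrt (s^2) := (Real.sqrt_sq hs0.le).symm
    _ ≤ Real.sqrt (a^2 + s^2) := Real.sqrt_le_sqrt (by nlinarith)
  -- combine
  have hchain : ENNReal.ofReal s ≤ ENNReal.ofReal (K * dist p q) := by
    calc ENNReal.ofReal s ≤ ENNReal.ofReal (dist p (0 : EuclideanSpace ℝ (Fin 3))) :=
          ENNReal.ofReal_le_ofReal hslb
    _ = edist p 0 := (edist_dist _ _).symm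
    _ ≤ eVariationOn γ (Set.Icc 0 1) := hvar
    _ ≤ ENNReal.ofReal (K * dist p q) := hlen
  have hfin : s ≤ K * dist p q := by
    rw [ENNReal.ofReal_le_ofReal_iff (by rw [hdpq]; positivity)] at hchain
    exact hchain
  rw [hdpq] at hfin
  have h2K : s ≤ 2 * K * s^2 := by nlinarith
  have hKs : K * s ≤ 1/4 := by
    calc K * s ≤ K * (1/(4*K)) := mul_le_mul_of_nonneg_left hsK hK.le
    _ = 1/4 := by field_simp
  nlinarith
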